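/- Let G(x) = (1/2)e^{-|x|}, and with the notation E_i, E_j, E_{ij}, σ_i, σ_j, σ_{ij} as above for distinct q_i, q_j ∈ ℝ. Then for all x ∉ {q_i, q_j}: (G * (σ_i σ_j E_i E_j))(x) = (1/3)(-E_i(x)E_j(x) + E_{ij}E_i(x) + E_{ij}E_j(x)) - (σ_{ij}/3)(σ_j(x)E_i(x)E_j(x) - σ_i(x)E_i(x)E_j(x) + E_{ij}σ_i(x)E_i(x) - E_{ij}σ_j(x)E_j(x)). -/

import Mathlib

open MeasureTheory Real Set Filter Topology intervalIntegral

private lemma expAux_integrableOn_Ioi (a : ℝ) {c : ℝ} (hc : 0 < c) (d : ℝ) :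
    IntegrableOn (fun y : ℝ => Real.exp (-(c * y) + d)) (Set.Ioi a) := by
  have h := (exp_neg_integrableOn_Ioi a hc).mul_const (Real.exp d)
  refine IntegrableOn.congr_fun h (fun y _ => ?_) measurableSet_Ioi
  rw [← Real.exp_add]
  ring_nf

private lemma expAux_integrableOn_Iio (a : ℝ) {c : ℝ} (hc : 0 < c) (d : ℝ) :
    IntegrableOn (fun y : ℝ => Real.exp (c * y + d)) (Set.Iio a) := by
  have h := expAux_integrableOn_Ioi (-a) hc d
  have h2 := (MeasurePreserving.integrableOn_comp_preimage
      (Measure.measurePreserving_neg (volume : Measure ℝ))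
      (Homeomorph.neg ℝ).measurableEmbedding).2 h
  simpa [Function.comp_def, neg_preimage, neg_Ioi, mul_neg, neg_neg] using h2

private lemma expAux_integral_Iio (a : ℝ) {c : ℝ} (hc : 0 < c) (d : ℝ) :
    ∫ y in Set.Iio a, Real.exp (c * y + d) = Real.exp (c * a + d) / c := by
  have hderiv : ∀ y ∈ Set.Iio a, HasDerivAt (fun y => Real.exp (c * y + d) / c)
      (Real.exp (c * y + d)) y := by
    intro y _
    have h1 : HasDerivAt (fun y : ℝ => c * y + d) c y := by
      simpa using ((hasDerivAt_id y).const_mul c).add_const d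
    have h2 := (h1.exp).div_const c
    simpa [mul_div_assoc, div_self hc.ne'] using h2
  have htend : Tendsto (fun y : ℝ => Real.exp (c * y + d) / c) atBot (𝓝 0) := by
    have h1 : Tendsto (fun y : ℝ => c * y + d) atBot atBot :=
      tendsto_atBot_add_const_right atBot d (tendsto_id.const_mul_atBot hc)
    have := (Real.tendsto_exp_atBot.comp h1).div_const c
    simpa using this
  have hcont : ContinuousWithinAt (fun y => Real.exp (c * y + d) / c) (Set.Iic a) a :=
    ((Real.continuous_exp.comp ((continuous_const.mul continuous_id).add
      continuous_const)).div_const c).continuousWithinAt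
  have hint : IntegrableOn (fun y : ℝ => Real.exp (c * y + d)) (Set.Iic a) :=
    (integrableOn_Iic_iff_integrableOn_Iio (by simp)).2 (expAux_integrableOn_Iio a hc d)
  have := integral_Iic_of_hasDerivAt_of_tendsto hcont hderiv hint htend
  rw [← integral_Iic_eq_integral_Iio, this, sub_zero]

private lemma expAux_integral_Ioi (a : ℝ) {c : ℝ} (hc : 0 < c) (d : ℝ) :
    ∫ y in Set.Ioi a, Real.exp (-(c * y) + d) = Real.exp (-(c * a) + d) / c := by
  have hderiv : ∀ y ∈ Set.Ioi a, HasDerivAt (fun y => -(Real.exp (-(c * y) + d) / c))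
      (Real.exp (-(c * y) + d)) y := by
    intro y _
    have h1 : HasDerivAt (fun y : ℝ => -(c * y) + d) (-c) y := by
      simpa using (((hasDerivAt_id y).const_mul c).neg).add_const d
    have h2 := ((h1.exp).div_const c).neg
    rw [show -(Real.exp (-(c * y) + d) * -c / c) = Real.exp (-(c * y) + d) by
      field_simp] at h2
    exact h2
  have htend : Tendsto (fun y : ℝ => -(Real.exp (-(c * y) + d) / c)) atTop (𝓝 0) := by
    have h1 : Tendsto (fun y : ℝ => -(c * y) + d) atTop atBot :=
      tendsto_atBot_add_const_right atTop d
        (tendsto_neg_atTop_atBot.comp (tendsto_id.const_mul_atTop hc))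
    have := ((Real.tendsto_exp_atBot.comp h1).div_const c).neg
    simpa using this
  have hcont : ContinuousWithinAt (fun y => -(Real.exp (-(c * y) + d) / c)) (Set.Ici a) a :=
    (((Real.continuous_exp.comp (((continuous_const.mul continuous_id).neg).add
      continuous_const)).div_const c).neg).continuousWithinAt
  have hint : IntegrableOn (fun y : ℝ => Real.exp (-(c * y) + d)) (Set.Ioi a) :=
    expAux_integrableOn_Ioi a hc d
  have := integral_Ioi_of_hasDerivAt_of_tendsto hcont hderiv hint htend
  rw [this]
  ring

private lemma expAux_integral_Ioc {a b : ℝ} (hab : a ≤ b) {c : ℝ} (hc : c ≠ 0) (d : ℝ) :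
    ∫ y in Set.Ioc a b, Real.exp (c * y + d)
      = (Real.exp (c * b + d) - Real.exp (c * a + d)) / c := by
  rw [← integral_of_le hab,
    integral_comp_mul_add Real.exp hc d, integral_exp]
  rw [smul_eq_mul]
  ring

private lemma piece_Iio {F : ℝ → ℝ} {p k c d : ℝ} (hc : 0 < c)
    (hF : ∀ y, y < p → F y = k * Real.exp (c * y + d)) :
    IntegrableOn F (Set.Iio p) ∧
      ∫ y in Set.Iio p, F y = k * (Real.exp (c * p + d) / c) := by
  have heq : Set.EqOn (fun y => k * Real.exp (c * y + d)) F (Set.Iio p) :=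
    fun y hy => (hF y hy).symm
  have hint : IntegrableOn (fun y : ℝ => k * Real.exp (c * y + d)) (Set.Iio p) :=
    (expAux_integrableOn_Iio p hc d).const_mul k
  refine ⟨hint.congr_fun heq measurableSet_Iio, ?_⟩
  rw [← setIntegral_congr_fun measurableSet_Iio heq, MeasureTheory.integral_const_mul k,
    expAux_integral_Iio p hc d]

private lemma piece_Ioi {F : ℝ → ℝ} {p k c d : ℝ} (hc : 0 < c)
    (hF : ∀ y, p < y → F y = k * Real.exp (-(c * y) + d)) :
    IntegrableOn F (Set.Ioi p) ∧
      ∫ y in Set.Ioi p, F y = k * (Real.exp (-(c * p) + d) / c) := by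
  have heq : Set.EqOn (fun y => k * Real.exp (-(c * y) + d)) F (Set.Ioi p) :=
    fun y hy => (hF y hy).symm
  have hint : IntegrableOn (fun y : ℝ => k * Real.exp (-(c * y) + d)) (Set.Ioi p) :=
    (expAux_integrableOn_Ioi p hc d).const_mul k
  refine ⟨hint.congr_fun heq measurableSet_Ioi, ?_⟩
  rw [← setIntegral_congr_fun measurableSet_Ioi heq, MeasureTheory.integral_const_mul k,
    expAux_integral_Ioi p hc d]

private lemma piece_Ioc {F : ℝ → ℝ} {p q k c d : ℝ} (hpq : p ≤ q) (hc : c ≠ 0)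
    (hF : ∀ y, p < y → y < q → F y = k * Real.exp (c * y + d)) :
    IntegrableOn F (Set.Ioc p q) ∧
      ∫ y in Set.Ioc p q, F y
        = k * ((Real.exp (c * q + d) - Real.exp (c * p + d)) / c) := by
  have heq : Set.EqOn (fun y => k * Real.exp (c * y + d)) F (Set.Ioo p q) :=
    fun y hy => (hF y hy.1 hy.2).symm
  have hcont : Continuous fun y : ℝ => k * Real.exp (c * y + d) :=
    continuous_const.mul (Real.continuous_exp.comp
      ((continuous_const.mul continuous_id).add continuous_const))
  have hres : (volume : Measure ℝ).restrict (Set.Ioc p q)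
      = (volume : Measure ℝ).restrict (Set.Ioo p q) :=
    (Measure.restrict_congr_set Ioo_ae_eq_Ioc).symm
  have hintOoo : IntegrableOn (fun y : ℝ => k * Real.exp (c * y + d)) (Set.Ioo p q) :=
    (hcont.integrableOn_Ioc).mono_set Set.Ioo_subset_Ioc_self
  constructor
  · rw [IntegrableOn, hres]
    exact hintOoo.congr_fun heq measurableSet_Ioo
  · rw [MeasureTheory.integral_Ioc_eq_integral_Ioo,
      ← setIntegral_congr_fun measurableSet_Ioo heq, MeasureTheory.integral_const_mul k,
      ← MeasureTheory.integral_Ioc_eq_integral_Ioo, expAux_integral_Ioc hpq hc d]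

private lemma integral_split4 {F : ℝ → ℝ} {p1 p2 p3 : ℝ} (h12 : p1 ≤ p2) (h23 : p2 ≤ p3)
    (h1 : IntegrableOn F (Set.Iio p1)) (h2 : IntegrableOn F (Set.Ioc p1 p2))
    (h3 : IntegrableOn F (Set.Ioc p2 p3)) (h4 : IntegrableOn F (Set.Ioi p3)) :
    ∫ y, F y = (∫ y in Set.Iio p1, F y) + (∫ y in Set.Ioc p1 p2, F y)
      + (∫ y in Set.Ioc p2 p3, F y) + (∫ y in Set.Ioi p3, F y) := by
  have h34 : IntegrableOn F (Set.Ioi p2) := by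
    rw [← Set.Ioc_union_Ioi_eq_Ioi h23]; exact h3.union h4
  have h234 : IntegrableOn F (Set.Ioi p1) := by
    rw [← Set.Ioc_union_Ioi_eq_Ioi h12]; exact h2.union h34
  have e1 : ∫ y in Set.Ioi p2, F y = (∫ y in Set.Ioc p2 p3, F y) + ∫ y in Set.Ioi p3, F y := by
    rw [← Set.Ioc_union_Ioi_eq_Ioi h23,
      setIntegral_union (Set.Ioc_disjoint_Ioi le_rfl) measurableSet_Ioi h3 h4]
  have e2 : ∫ y in Set.Ioi p1, F y = (∫ y in Set.Ioc p1 p2, F y) + ∫ y in Set.Ioi p2, F y := by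
    rw [← Set.Ioc_union_Ioi_eq_Ioi h12,
      setIntegral_union (Set.Ioc_disjoint_Ioi le_rfl) measurableSet_Ioi h2 h34]
  rw [← integral_Iic_add_Ioi ((integrableOn_Iic_iff_integrableOn_Iio (by simp)).2 h1) h234,
    MeasureTheory.integral_Iic_eq_integral_Iio, e2, e1]
  ring

set_option maxHeartbeats 2000000 in
private lemma main_lt (s t : ℝ) (hst : s < t) (x : ℝ) (hxs : x ≠ s) (hxt : x ≠ t) :
    (∫ y : ℝ, (1/2) * Real.exp (-|x - y|) *
        (Real.sign (y - s) * Real.sign (y - t) * Real.exp (-|y - s|) * Real.exp (-|y - t|)))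
      = (1/3) * (-(Real.exp (-|x - s|) * Real.exp (-|x - t|))
          + Real.exp (-|s - t|) * Real.exp (-|x - s|)
          + Real.exp (-|s - t|) * Real.exp (-|x - t|))
        - (Real.sign (s - t) / 3) *
          (Real.sign (x - t) * Real.exp (-|x - s|) * Real.exp (-|x - t|)
            - Real.sign (x - s) * Real.exp (-|x - s|) * Real.exp (-|x - t|)
            + Real.exp (-|s - t|) * Real.sign (x - s) * Real.exp (-|x - s|)
            - Real.exp (-|s - t|) * Real.sign (x - t) * Real.exp (-|x - t|)) := by
  have hst' : s ≤ t := hst.le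
  set F : ℝ → ℝ := fun y => (1/2) * Real.exp (-|x - y|) *
      (Real.sign (y - s) * Real.sign (y - t) * Real.exp (-|y - s|) * Real.exp (-|y - t|))
    with hF
  rcases lt_trichotomy x s with hx1 | hx1 | hx1
  · -- x < s < t
    have P1 := piece_Iio (F := F) (p := x) (k := (1/2 : ℝ)) (c := (3:ℝ)) (d := -x - s - t)
      (by norm_num) (fun y hy => by
        simp only [hF]
        rw [Real.sign_of_neg (show y - s < 0 by linarith),
          Real.sign_of_neg (show y - t < 0 by linarith),
          abs_of_pos (show (0:ℝ) < x - y by linarith),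
          abs_of_neg (show y - s < 0 by linarith),
          abs_of_neg (show y - t < 0 by linarith),
          show (3:ℝ) * y + (-x - s - t) = -(x - y) + -(-(y - s)) + -(-(y - t)) by ring,
          Real.exp_add, Real.exp_add]
        ring)
    have P2 := piece_Ioc (F := F) (p := x) (q := s) (k := (1/2 : ℝ)) (c := (1:ℝ))
      (d := x - s - t) hx1.le (by norm_num) (fun y hy1 hy2 => by
        simp only [hF]
        rw [Real.sign_of_neg (show y - s < 0 by linarith),
          Real.sign_of_neg (show y - t < 0 by linarith),
          abs_of_neg (show x - y < 0 by linarith),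
          abs_of_neg (show y - s < 0 by linarith),
          abs_of_neg (show y - t < 0 by linarith),
          show (1:ℝ) * y + (x - s - t) = -(-(x - y)) + -(-(y - s)) + -(-(y - t)) by ring,
          Real.exp_add, Real.exp_add]
        ring)
    have P3 := piece_Ioc (F := F) (p := s) (q := t) (k := -(1/2 : ℝ)) (c := (-1:ℝ))
      (d := x + s - t) hst' (by norm_num) (fun y hy1 hy2 => by
        simp only [hF]
        rw [Real.sign_of_pos (show (0:ℝ) < y - s by linarith),
          Real.sign_of_neg (show y - t < 0 by linarith),
          abs_of_neg (show x - y < 0 by linarith),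
          abs_of_pos (show (0:ℝ) < y - s by linarith),
          abs_of_neg (show y - t < 0 by linarith),
          show (-1:ℝ) * y + (x + s - t) = -(-(x - y)) + -(y - s) + -(-(y - t)) by ring,
          Real.exp_add, Real.exp_add]
        ring)
    have P4 := piece_Ioi (F := F) (p := t) (k := (1/2 : ℝ)) (c := (3:ℝ)) (d := x + s + t)
      (by norm_num) (fun y hy => by
        simp only [hF]
        rw [Real.sign_of_pos (show (0:ℝ) < y - s by linarith),
          Real.sign_of_pos (show (0:ℝ) < y - t by linarith),
          abs_of_neg (show x - y < 0 by linarith),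
          abs_of_pos (show (0:ℝ) < y - s by linarith),
          abs_of_pos (show (0:ℝ) < y - t by linarith),
          show -((3:ℝ) * y) + (x + s + t) = -(-(x - y)) + -(y - s) + -(y - t) by ring,
          Real.exp_add, Real.exp_add]
        ring)
    rw [integral_split4 hx1.le hst' P1.1 P2.1 P3.1 P4.1, P1.2, P2.2, P3.2, P4.2,
      Real.sign_of_neg (show s - t < 0 by linarith),
      Real.sign_of_neg (show x - s < 0 by linarith),
      Real.sign_of_neg (show x - t < 0 by linarith),
      abs_of_neg (show x - s < 0 by linarith),
      abs_of_neg (show x - t < 0 by linarith),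
      abs_of_neg (show s - t < 0 by linarith),
      show (3:ℝ) * x + (-x - s - t) = x + x - s - t by ring,
      show (1:ℝ) * s + (x - s - t) = x - t by ring,
      show (1:ℝ) * x + (x - s - t) = x + x - s - t by ring,
      show (-1:ℝ) * t + (x + s - t) = x + s - t - t by ring,
      show (-1:ℝ) * s + (x + s - t) = x - t by ring,
      show -((3:ℝ) * t) + (x + s + t) = x + s - t - t by ring]
    simp only [neg_neg, Real.exp_add, Real.exp_sub, Real.exp_neg]
    field_simp
    ring
  · exact absurd hx1 hxs
  · rcases lt_trichotomy x t with hx2 | hx2 | hx2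
    · -- s < x < t
      have P1 := piece_Iio (F := F) (p := s) (k := (1/2 : ℝ)) (c := (3:ℝ)) (d := -x - s - t)
        (by norm_num) (fun y hy => by
          simp only [hF]
          rw [Real.sign_of_neg (show y - s < 0 by linarith),
            Real.sign_of_neg (show y - t < 0 by linarith),
            abs_of_pos (show (0:ℝ) < x - y by linarith),
            abs_of_neg (show y - s < 0 by linarith),
            abs_of_neg (show y - t < 0 by linarith),
            show (3:ℝ) * y + (-x - s - t) = -(x - y) + -(-(y - s)) + -(-(y - t)) by ring,
            Real.exp_add, Real.exp_add]
          ring)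
      have P2 := piece_Ioc (F := F) (p := s) (q := x) (k := -(1/2 : ℝ)) (c := (1:ℝ))
        (d := s - x - t) hx1.le (by norm_num) (fun y hy1 hy2 => by
          simp only [hF]
          rw [Real.sign_of_pos (show (0:ℝ) < y - s by linarith),
            Real.sign_of_neg (show y - t < 0 by linarith),
            abs_of_pos (show (0:ℝ) < x - y by linarith),
            abs_of_pos (show (0:ℝ) < y - s by linarith),
            abs_of_neg (show y - t < 0 by linarith),
            show (1:ℝ) * y + (s - x - t) = -(x - y) + -(y - s) + -(-(y - t)) by ring,
            Real.exp_add, Real.exp_add]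
          ring)
      have P3 := piece_Ioc (F := F) (p := x) (q := t) (k := -(1/2 : ℝ)) (c := (-1:ℝ))
        (d := x + s - t) hx2.le (by norm_num) (fun y hy1 hy2 => by
          simp only [hF]
          rw [Real.sign_of_pos (show (0:ℝ) < y - s by linarith),
            Real.sign_of_neg (show y - t < 0 by linarith),
            abs_of_neg (show x - y < 0 by linarith),
            abs_of_pos (show (0:ℝ) < y - s by linarith),
            abs_of_neg (show y - t < 0 by linarith),
            show (-1:ℝ) * y + (x + s - t) = -(-(x - y)) + -(y - s) + -(-(y - t)) by ring,
            Real.exp_add, Real.exp_add]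
          ring)
      have P4 := piece_Ioi (F := F) (p := t) (k := (1/2 : ℝ)) (c := (3:ℝ)) (d := x + s + t)
        (by norm_num) (fun y hy => by
          simp only [hF]
          rw [Real.sign_of_pos (show (0:ℝ) < y - s by linarith),
            Real.sign_of_pos (show (0:ℝ) < y - t by linarith),
            abs_of_neg (show x - y < 0 by linarith),
            abs_of_pos (show (0:ℝ) < y - s by linarith),
            abs_of_pos (show (0:ℝ) < y - t by linarith),
            show -((3:ℝ) * y) + (x + s + t) = -(-(x - y)) + -(y - s) + -(y - t) by ring,
            Real.exp_add, Real.exp_add]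
          ring)
      rw [integral_split4 hx1.le hx2.le P1.1 P2.1 P3.1 P4.1, P1.2, P2.2, P3.2, P4.2,
        Real.sign_of_neg (show s - t < 0 by linarith),
        Real.sign_of_pos (show (0:ℝ) < x - s by linarith),
        Real.sign_of_neg (show x - t < 0 by linarith),
        abs_of_pos (show (0:ℝ) < x - s by linarith),
        abs_of_neg (show x - t < 0 by linarith),
        abs_of_neg (show s - t < 0 by linarith),
        show (3:ℝ) * s + (-x - s - t) = s + s - x - t by ring,
        show (1:ℝ) * x + (s - x - t) = s - t by ring,
        show (1:ℝ) * s + (s - x - t) = s + s - x - t by ring,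
        show (-1:ℝ) * t + (x + s - t) = x + s - t - t by ring,
        show (-1:ℝ) * x + (x + s - t) = s - t by ring,
        show -((3:ℝ) * t) + (x + s + t) = x + s - t - t by ring]
      simp only [neg_neg, Real.exp_add, Real.exp_sub, Real.exp_neg]
      field_simp
      ring
    · exact absurd hx2 hxt
    · -- s < t < x
      have P1 := piece_Iio (F := F) (p := s) (k := (1/2 : ℝ)) (c := (3:ℝ)) (d := -x - s - t)
        (by norm_num) (fun y hy => by
          simp only [hF]
          rw [Real.sign_of_neg (show y - s < 0 by linarith),
            Real.sign_of_neg (show y - t < 0 by linarith),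
            abs_of_pos (show (0:ℝ) < x - y by linarith),
            abs_of_neg (show y - s < 0 by linarith),
            abs_of_neg (show y - t < 0 by linarith),
            show (3:ℝ) * y + (-x - s - t) = -(x - y) + -(-(y - s)) + -(-(y - t)) by ring,
            Real.exp_add, Real.exp_add]
          ring)
      have P2 := piece_Ioc (F := F) (p := s) (q := t) (k := -(1/2 : ℝ)) (c := (1:ℝ))
        (d := s - x - t) hst' (by norm_num) (fun y hy1 hy2 => by
          simp only [hF]
          rw [Real.sign_of_pos (show (0:ℝ) < y - s by linarith),
            Real.sign_of_neg (show y - t < 0 by linarith),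
            abs_of_pos (show (0:ℝ) < x - y by linarith),
            abs_of_pos (show (0:ℝ) < y - s by linarith),
            abs_of_neg (show y - t < 0 by linarith),
            show (1:ℝ) * y + (s - x - t) = -(x - y) + -(y - s) + -(-(y - t)) by ring,
            Real.exp_add, Real.exp_add]
          ring)
      have P3 := piece_Ioc (F := F) (p := t) (q := x) (k := (1/2 : ℝ)) (c := (-1:ℝ))
        (d := s + t - x) hx2.le (by norm_num) (fun y hy1 hy2 => by
          simp only [hF]
          rw [Real.sign_of_pos (show (0:ℝ) < y - s by linarith),
            Real.sign_of_pos (show (0:ℝ) < y - t by linarith),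
            abs_of_pos (show (0:ℝ) < x - y by linarith),
            abs_of_pos (show (0:ℝ) < y - s by linarith),
            abs_of_pos (show (0:ℝ) < y - t by linarith),
            show (-1:ℝ) * y + (s + t - x) = -(x - y) + -(y - s) + -(y - t) by ring,
            Real.exp_add, Real.exp_add]
          ring)
      have P4 := piece_Ioi (F := F) (p := x) (k := (1/2 : ℝ)) (c := (3:ℝ)) (d := x + s + t)
        (by norm_num) (fun y hy => by
          simp only [hF]
          rw [Real.sign_of_pos (show (0:ℝ) < y - s by linarith),
            Real.sign_of_pos (show (0:ℝ) < y - t by linarith),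
            abs_of_neg (show x - y < 0 by linarith),
            abs_of_pos (show (0:ℝ) < y - s by linarith),
            abs_of_pos (show (0:ℝ) < y - t by linarith),
            show -((3:ℝ) * y) + (x + s + t) = -(-(x - y)) + -(y - s) + -(y - t) by ring,
            Real.exp_add, Real.exp_add]
          ring)
      rw [integral_split4 hst' hx2.le P1.1 P2.1 P3.1 P4.1, P1.2, P2.2, P3.2, P4.2,
        Real.sign_of_neg (show s - t < 0 by linarith),
        Real.sign_of_pos (show (0:ℝ) < x - s by linarith),
        Real.sign_of_pos (show (0:ℝ) < x - t by linarith),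
        abs_of_pos (show (0:ℝ) < x - s by linarith),
        abs_of_pos (show (0:ℝ) < x - t by linarith),
        abs_of_neg (show s - t < 0 by linarith),
        show (3:ℝ) * s + (-x - s - t) = s + s - x - t by ring,
        show (1:ℝ) * t + (s - x - t) = s - x by ring,
        show (1:ℝ) * s + (s - x - t) = s + s - x - t by ring,
        show (-1:ℝ) * x + (s + t - x) = s + t - x - x by ring,
        show (-1:ℝ) * t + (s + t - x) = s - x by ring,
        show -((3:ℝ) * x) + (x + s + t) = s + t - x - x by ring]
      simp only [neg_neg, Real.exp_add, Real.exp_sub, Real.exp_neg]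
      field_simp
      ring


/-- Convolution of the Helmholtz kernel with `σ_i σ_j E_i E_j` for distinct peaks `q_i ≠ q_j`. -/
theorem helmholtz_conv_sigma_EiEj (qi qj : ℝ) (hq : qi ≠ qj) (x : ℝ) (hxi : x ≠ qi)
    (hxj : x ≠ qj) :
    (∫ y : ℝ, (1/2) * Real.exp (-|x - y|) *
        (Real.sign (y - qi) * Real.sign (y - qj) * Real.exp (-|y - qi|) * Real.exp (-|y - qj|)))
      = (1/3) * (-(Real.exp (-|x - qi|) * Real.exp (-|x - qj|))
          + Real.exp (-|qi - qj|) * Real.exp (-|x - qi|)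
          + Real.exp (-|qi - qj|) * Real.exp (-|x - qj|))
        - (Real.sign (qi - qj) / 3) *
          (Real.sign (x - qj) * Real.exp (-|x - qi|) * Real.exp (-|x - qj|)
            - Real.sign (x - qi) * Real.exp (-|x - qi|) * Real.exp (-|x - qj|)
            + Real.exp (-|qi - qj|) * Real.sign (x - qi) * Real.exp (-|x - qi|)
            - Real.exp (-|qi - qj|) * Real.sign (x - qj) * Real.exp (-|x - qj|)) := by
  rcases hq.lt_or_gt with h | h
  · exact main_lt qi qj h x hxi hxj
  · have H := main_lt qj qi h x hxj hxi
    have hI : (∫ y : ℝ, (1/2) * Real.exp (-|x - y|) *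
          (Real.sign (y - qi) * Real.sign (y - qj) * Real.exp (-|y - qi|) * Real.exp (-|y - qj|)))
        = ∫ y : ℝ, (1/2) * Real.exp (-|x - y|) *
          (Real.sign (y - qj) * Real.sign (y - qi) * Real.exp (-|y - qj|)
            * Real.exp (-|y - qi|)) := by
      congr 1
      ext y
      ring
    rw [hI, H, abs_sub_comm qj qi, Real.sign_of_neg (sub_neg.mpr h),
      Real.sign_of_pos (sub_pos.mpr h)]
    ring
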